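/- Fix a real number x > 0. On the interval [0,1], the function p ↦ y2(p, x) is strictly increasing if q2 > p13/(p13+p23), strictly decreasing if q2 < p13/(p13+p23), and constant if q2 = p13/(p13+p23). -/

import Mathlib

/-- Fix a real number `x > 0`. On the interval `[0,1]`, the function
`p ↦ y2(p, x)` is strictly increasing if `q2 > p13/(p13+p23)`, strictly decreasing if
`q2 < p13/(p13+p23)`, and constant if `q2 = p13/(p13+p23)`. -/
theorem stmt_3 (q1 q2 p12 p13 p23 : ℝ)
    (hq1 : 0 < q1) (hq1' : q1 < 1) (hq2 : 0 < q2) (hq2' : q2 < 1)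
    (hp12 : 0 < p12) (hp12' : p12 ≤ 1) (hp13 : 0 < p13) (hp13' : p13 < 1)
    (hp23 : 0 < p23) (hp23' : p23 ≤ 1) (hp : p13 < p23)
    (y2 : ℝ → ℝ → ℝ)
    (hy2 : ∀ p x, y2 p x =
      q2 * p23 - ((1 - q2) * p12 * (1 - p13) * p + q2 * p23) * x /
        ((1 - q2) * (p13 + (1 - p13) * p12 * p)))
    (x : ℝ) (hx : 0 < x) :
    (q2 > p13 / (p13 + p23) → StrictMonoOn (fun p => y2 p x) (Set.Icc 0 1)) ∧
    (q2 < p13 / (p13 + p23) → StrictAntiOn (fun p => y2 p x) (Set.Icc 0 1)) ∧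
    (q2 = p13 / (p13 + p23) →
      ∀ p ∈ Set.Icc (0:ℝ) 1, ∀ q ∈ Set.Icc (0:ℝ) 1, y2 p x = y2 q x) := by
  have hq2n : (0:ℝ) < 1 - q2 := by linarith
  have hp13n : (0:ℝ) < 1 - p13 := by linarith
  have hsum : (0:ℝ) < p13 + p23 := by linarith
  have hA : 0 < (1 - q2) * p12 * (1 - p13) := by positivity
  have key : ∀ t ∈ Set.Icc (0:ℝ) 1, 0 < (1 - q2) * (p13 + (1 - p13) * p12 * t) := by
    intro t ht
    have h0 : 0 ≤ (1 - p13) * p12 * t := by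
      have := ht.1; positivity
    nlinarith
  refine ⟨?_, ?_, ?_⟩
  · intro hgt p hpI q hqI hpq
    have hBC : 0 < q2 * p23 - (1 - q2) * p13 := by
      rw [gt_iff_lt, div_lt_iff₀ hsum] at hgt; nlinarith
    simp only [hy2]
    apply sub_lt_sub_left
    rw [div_lt_div_iff₀ (key q hqI) (key p hpI)]
    nlinarith [mul_pos (mul_pos (mul_pos hx hA) (sub_pos.mpr hpq)) hBC]
  · intro hlt p hpI q hqI hpq
    have hBC : 0 < (1 - q2) * p13 - q2 * p23 := by
      rw [lt_div_iff₀ hsum] at hlt; nlinarith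
    simp only [hy2]
    apply sub_lt_sub_left
    rw [div_lt_div_iff₀ (key p hpI) (key q hqI)]
    nlinarith [mul_pos (mul_pos (mul_pos hx hA) (sub_pos.mpr hpq)) hBC]
  · intro heq p hpI q hqI
    have hBC : q2 * (p13 + p23) = p13 := by
      field_simp at heq; linarith [heq]
    have const : ∀ t ∈ Set.Icc (0:ℝ) 1, y2 t x = q2 * p23 - x := by
      intro t htI
      rw [hy2]
      have hD := key t htI
      have hnum : ((1 - q2) * p12 * (1 - p13) * t + q2 * p23) = (1 - q2) * (p13 + (1 - p13) * p12 * t) := by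
        linear_combination hBC
      rw [hnum, mul_div_cancel_left₀ x hD.ne']
    rw [const p hpI, const q hqI]
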